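/- Let g > 1 be a rational number (g ∉ {−1,0,1}) and d a positive integer with d ≡ 2 (mod 4). Then for odd primes p not dividing the numerator or denominator of g: d divides ord_p(−g) if and only if exactly one of the following holds: (i) d/2 divides ord_p(g) and d does not divide ord_p(g), or (ii) 2d divides ord_p(g). Consequently the number of primes p ≤ x with d | ord_p(−g) equals N_g(d/2)(x) + N_g(2d)(x) − N_g(d)(x) + O(1). -/

import Mathlib

open scoped Classical

/-- The multiplicative order of the rational number `g` modulo `p`. -/
noncomputable def ordp (p : ℕ) (g : ℚ) : ℕ :=
  orderOf ((g.num : ZMod p) * (g.den : ZMod p)⁻¹)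

/-- `Ncount g d x` is the number of primes `p ≤ x` with `ν_p(g) = 0` such that
`d` divides the multiplicative order of `g` modulo `p`. -/
noncomputable def Ncount (g : ℚ) (d : ℕ) (x : ℕ) : ℕ :=
  ((Finset.range (x + 1)).filter
    (fun p : ℕ => p.Prime ∧ ¬ (p : ℤ) ∣ g.num ∧ ¬ p ∣ g.den ∧ d ∣ ordp p g)).card

section Aux

variable {p : ℕ} [Fact p.Prime]

lemma aux_orderOf_neg_one_zmod (hp : p ≠ 2) : orderOf (-1 : ZMod p) = 2 := by
  rw [orderOf_neg_one, if_neg]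
  rw [ringChar.eq (ZMod p) p]
  exact hp

lemma aux_orderOf_neg_of_odd (hp : p ≠ 2) (u : ZMod p)
    (hn : Odd (orderOf u)) : orderOf (-u) = 2 * orderOf u := by
  rw [neg_eq_neg_one_mul, (Commute.all _ _).orderOf_mul_eq_mul_orderOf_of_coprime,
    aux_orderOf_neg_one_zmod hp]
  rw [aux_orderOf_neg_one_zmod hp]
  exact Nat.coprime_two_left.mpr hn

lemma aux_eq_neg_one_of_orderOf_two (u : ZMod p) (h : orderOf u = 2) : u = -1 := by
  have h2 : u ^ 2 = 1 := h ▸ pow_orderOf_eq_one u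
  rcases sq_eq_one_iff.mp h2 with h1 | h1
  · rw [h1, orderOf_one] at h; omega
  · exact h1

lemma aux_pow_half_eq_neg_one (u : ZMod p) (hn : orderOf u ≠ 0) (h2 : 2 ∣ orderOf u) :
    u ^ (orderOf u / 2) = -1 := by
  have hk : orderOf u / 2 ≠ 0 := by
    obtain ⟨k, hk⟩ := h2; omega
  apply aux_eq_neg_one_of_orderOf_two
  rw [orderOf_pow' _ hk, Nat.gcd_eq_right (Nat.div_dvd_of_dvd h2),
    Nat.div_div_self h2 hn]

lemma aux_orderOf_neg_of_two_mod_four (hp : p ≠ 2) (u : ZMod p)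
    (hn : orderOf u % 4 = 2) : orderOf (-u) = orderOf u / 2 := by
  set n := orderOf u with hn'
  have hk : u ^ (n / 2) = -1 := aux_pow_half_eq_neg_one u (by omega) ⟨n / 2, by omega⟩
  have hko : Odd (n / 2) := by rw [Nat.odd_iff]; omega
  have h1 : (-u) ^ (n / 2) = 1 := by
    rw [neg_pow, hk, Odd.neg_one_pow hko]; norm_num
  have hdvd : orderOf (-u) ∣ n / 2 := orderOf_dvd_of_pow_eq_one h1
  have hodd : Odd (orderOf (-u)) := hko.of_dvd_nat hdvd
  have := aux_orderOf_neg_of_odd hp (-u) hodd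
  rw [neg_neg] at this
  omega

lemma aux_orderOf_neg_of_four_dvd (hp : p ≠ 2) (u : ZMod p)
    (hn0 : orderOf u ≠ 0) (hn : 4 ∣ orderOf u) : orderOf (-u) = orderOf u := by
  set n := orderOf u with hn'
  have h1 : (-u) ^ n = 1 := by
    rw [neg_pow, pow_orderOf_eq_one,
      Even.neg_one_pow (by obtain ⟨k, hk⟩ := hn; exact ⟨2 * k, by omega⟩), one_mul]
  have hdvd : orderOf (-u) ∣ n := orderOf_dvd_of_pow_eq_one h1
  have hne : orderOf (-u) ≠ 0 := by
    intro h; rw [h] at hdvd; exact hn0 (Nat.eq_zero_of_zero_dvd hdvd)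
  have heven : ¬ Odd (orderOf (-u)) := by
    intro hodd
    have := aux_orderOf_neg_of_odd hp (-u) hodd
    rw [neg_neg] at this
    rw [Nat.odd_iff] at hodd
    obtain ⟨k, hk⟩ := hn
    omega
  have h2 : u ^ (orderOf (-u)) = 1 := by
    have := pow_orderOf_eq_one (-u)
    rwa [neg_pow, Even.neg_one_pow (Nat.not_odd_iff_even.mp heven), one_mul] at this
  exact Nat.dvd_antisymm hdvd (orderOf_dvd_of_pow_eq_one h2)

lemma aux_key_iff (hp : p ≠ 2) (u : ZMod p) (hu : orderOf u ≠ 0) (d : ℕ) (hd2 : d % 4 = 2) :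
    d ∣ orderOf (-u) ↔
      Xor' (d / 2 ∣ orderOf u ∧ ¬ d ∣ orderOf u) (2 * d ∣ orderOf u) := by
  set n := orderOf u with hn
  obtain ⟨m, hm, hmo⟩ : ∃ m, d = 2 * m ∧ m % 2 = 1 := ⟨d / 2, by omega, by omega⟩
  have hcop2 : Nat.Coprime 2 m := by
    rw [Nat.coprime_two_left, Nat.odd_iff]; exact hmo
  have hcop4 : Nat.Coprime 4 m := Nat.Coprime.pow_left 2 hcop2
  have hd2' : d / 2 = m := by omega
  rcases (Nat.even_or_odd n).symm with hodd | heven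
  · rw [aux_orderOf_neg_of_odd hp u hodd, hd2', hm, ← hn]
    have h2n : ¬ 2 * m ∣ n := by
      intro h
      have h2 : 2 ∣ n := (dvd_mul_right 2 m).trans h
      rw [Nat.odd_iff] at hodd; obtain ⟨c, hc⟩ := h2; omega
    have h4n : ¬ 2 * (2 * m) ∣ n := by
      intro h
      exact h2n ((dvd_mul_left (2 * m) 2).trans h)
    have hiff : 2 * m ∣ 2 * n ↔ m ∣ n := Nat.mul_dvd_mul_iff_left (by norm_num)
    simp [Xor', xor_def, h2n, h4n, hiff]
  · rcases Nat.even_or_odd (n / 2) with hk2 | hk2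
    · have h4 : 4 ∣ n := by
        rw [Nat.even_iff] at heven hk2; omega
      rw [aux_orderOf_neg_of_four_dvd hp u hu h4, hd2', hm]
      have himp : m ∣ n → 4 * m ∣ n := fun hmn =>
        hcop4.mul_dvd_of_dvd_of_dvd h4 hmn
      have h24 : 2 * (2 * m) = 4 * m := by ring
      constructor
      · intro h
        have hmn : m ∣ n := (dvd_mul_left m 2).trans h
        right
        refine ⟨by rw [h24]; exact himp hmn, ?_⟩
        exact fun hc => hc.2 h
      · rintro (⟨⟨h1, h2⟩, _⟩ | ⟨h1, _⟩)
        · exact absurd ((dvd_mul_left (2 * m) 2).trans (h24 ▸ himp h1)) h2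
        · exact (dvd_mul_left (2 * m) 2).trans h1
    · have h42 : n % 4 = 2 := by
        rw [Nat.even_iff] at heven; rw [Nat.odd_iff] at hk2; omega
      rw [aux_orderOf_neg_of_two_mod_four hp u h42, hd2', hm, ← hn]
      have hn2 : n = 2 * (n / 2) := by omega
      have hlhs : ¬ 2 * m ∣ n / 2 := by
        intro h
        have h2 : 2 ∣ n / 2 := (dvd_mul_right 2 m).trans h
        rw [Nat.odd_iff] at hk2; obtain ⟨c, hc⟩ := h2; omega
      have hmn : m ∣ n ↔ m ∣ n / 2 := by
        constructor
        · intro h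
          exact (Nat.Coprime.dvd_of_dvd_mul_left (hcop2.symm)) (by rwa [← hn2])
        · intro h
          exact h.trans (Nat.div_dvd_of_dvd ⟨n / 2, hn2⟩)
      have h2dvd : 2 ∣ n := by omega
      have h2mn : 2 * m ∣ n ↔ m ∣ n / 2 :=
        (Nat.dvd_div_iff_mul_dvd h2dvd).symm
      have h4mn : ¬ 2 * (2 * m) ∣ n := by
        rw [← Nat.dvd_div_iff_mul_dvd h2dvd]
        exact hlhs
      simp [Xor', hlhs, hmn, h2mn, h4mn]

lemma aux_ordp_neg (g : ℚ) :
    ordp p (-g) = orderOf (-((g.num : ZMod p) * (g.den : ZMod p)⁻¹)) := by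
  unfold ordp
  rw [Rat.num_neg_eq_neg_num, Rat.den_neg_eq_den]
  push_cast
  ring_nf

lemma aux_ordp_ne_zero (g : ℚ) (hnum : ¬ (p : ℤ) ∣ g.num) (hden : ¬ p ∣ g.den) :
    orderOf ((g.num : ZMod p) * (g.den : ZMod p)⁻¹) ≠ 0 := by
  have hu : ((g.num : ZMod p) * (g.den : ZMod p)⁻¹) ≠ 0 := by
    apply mul_ne_zero
    · rwa [Ne, ZMod.intCast_zmod_eq_zero_iff_dvd]
    · rw [Ne, inv_eq_zero, ZMod.natCast_eq_zero_iff]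
      exact hden
  have h1 : ((g.num : ZMod p) * (g.den : ZMod p)⁻¹) ^ (p - 1) = 1 :=
    ZMod.pow_card_sub_one_eq_one hu
  intro h0
  have := orderOf_dvd_of_pow_eq_one h1
  rw [h0] at this
  have hp := (Fact.out : p.Prime).two_le
  omega

end Aux

lemma aux_part1 (g : ℚ) (d : ℕ) (hd2 : d % 4 = 2)
    (p : ℕ) (pp : p.Prime) (hpo : Odd p) (hnum : ¬ (p : ℤ) ∣ g.num) (hden : ¬ p ∣ g.den) :
    d ∣ ordp p (-g) ↔
      Xor' (d / 2 ∣ ordp p g ∧ ¬ d ∣ ordp p g) (2 * d ∣ ordp p g) := by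
  haveI := Fact.mk pp
  have hp2 : p ≠ 2 := by
    rintro rfl
    rw [Nat.odd_iff] at hpo
    omega
  rw [aux_ordp_neg]
  exact aux_key_iff hp2 _ (aux_ordp_ne_zero g hnum hden) d hd2

lemma aux_filter_ne_two (s : Finset ℕ) (R : ℕ → Prop) [DecidablePred R]
    [DecidablePred (fun p => p ≠ 2 ∧ R p)] :
    (s.filter (fun p => p ≠ 2 ∧ R p)).card ≤ (s.filter R).card ∧
    (s.filter R).card ≤ (s.filter (fun p => p ≠ 2 ∧ R p)).card + 1 := by
  constructor
  · apply Finset.card_le_card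
    intro a ha
    rw [Finset.mem_filter] at ha ⊢
    exact ⟨ha.1, ha.2.2⟩
  · have hsub : s.filter R ⊆ s.filter (fun p => p ≠ 2 ∧ R p) ∪ {2} := by
      intro a ha
      rw [Finset.mem_filter] at ha
      rw [Finset.mem_union, Finset.mem_filter, Finset.mem_singleton]
      by_cases h2 : a = 2
      · right; exact h2
      · left; exact ⟨ha.1, h2, ha.2⟩
    calc (s.filter R).card ≤ (s.filter (fun p => p ≠ 2 ∧ R p) ∪ {2}).card :=
          Finset.card_le_card hsub
      _ ≤ (s.filter (fun p => p ≠ 2 ∧ R p)).card + ({2} : Finset ℕ).card :=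
          Finset.card_union_le _ _
      _ = (s.filter (fun p => p ≠ 2 ∧ R p)).card + 1 := by simp

theorem neg_g_counting (g : ℚ) (hg : 1 < g) (d : ℕ) (hd : 0 < d) (hd2 : d % 4 = 2) :
    (∀ p : ℕ, p.Prime → Odd p → ¬ (p : ℤ) ∣ g.num → ¬ p ∣ g.den →
      (d ∣ ordp p (-g) ↔
        Xor' (d / 2 ∣ ordp p g ∧ ¬ d ∣ ordp p g) (2 * d ∣ ordp p g))) ∧
    ∃ C : ℝ, ∀ x : ℕ,
      |(Ncount (-g) d x : ℝ) -
        ((Ncount g (d / 2) x : ℝ) + (Ncount g (2 * d) x : ℝ) - (Ncount g d x : ℝ))| ≤ C := by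
  refine ⟨fun p pp hpo hnum hden => aux_part1 g d hd2 p pp hpo hnum hden, 4, fun x => ?_⟩
  set s := Finset.range (x + 1) with hs
  have eA : Ncount (-g) d x = (s.filter (fun p : ℕ => p.Prime ∧ ¬ (p : ℤ) ∣ g.num ∧ ¬ p ∣ g.den ∧ d ∣ ordp p (-g))).card := by
    unfold Ncount
    simp only [Rat.num_neg_eq_neg_num, Rat.den_neg_eq_den, dvd_neg]
    rfl
  have em : Ncount g (d / 2) x = (s.filter (fun p : ℕ => p.Prime ∧ ¬ (p : ℤ) ∣ g.num ∧ ¬ p ∣ g.den ∧ d / 2 ∣ ordp p g)).card := rfl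
  have ed : Ncount g d x = (s.filter (fun p : ℕ => p.Prime ∧ ¬ (p : ℤ) ∣ g.num ∧ ¬ p ∣ g.den ∧ d ∣ ordp p g)).card := rfl
  have e2 : Ncount g (2 * d) x = (s.filter (fun p : ℕ => p.Prime ∧ ¬ (p : ℤ) ∣ g.num ∧ ¬ p ∣ g.den ∧ 2 * d ∣ ordp p g)).card := rfl
  have key : (s.filter (fun p => p ≠ 2 ∧ (fun p : ℕ => p.Prime ∧ ¬ (p : ℤ) ∣ g.num ∧ ¬ p ∣ g.den ∧ d ∣ ordp p (-g)) p)).card + (s.filter (fun p => p ≠ 2 ∧ (fun p : ℕ => p.Prime ∧ ¬ (p : ℤ) ∣ g.num ∧ ¬ p ∣ g.den ∧ d ∣ ordp p g) p)).card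
      = (s.filter (fun p => p ≠ 2 ∧ (fun p : ℕ => p.Prime ∧ ¬ (p : ℤ) ∣ g.num ∧ ¬ p ∣ g.den ∧ d / 2 ∣ ordp p g) p)).card + (s.filter (fun p => p ≠ 2 ∧ (fun p : ℕ => p.Prime ∧ ¬ (p : ℤ) ∣ g.num ∧ ¬ p ∣ g.den ∧ 2 * d ∣ ordp p g) p)).card := by
    rw [Finset.card_filter, Finset.card_filter, Finset.card_filter, Finset.card_filter,
      ← Finset.sum_add_distrib, ← Finset.sum_add_distrib]
    apply Finset.sum_congr rfl
    intro p _
    by_cases h2 : p = 2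
    · simp [h2]
    by_cases hpr : p.Prime
    swap
    · simp [hpr]
    by_cases hnum : (p : ℤ) ∣ g.num
    · simp [hnum]
    by_cases hden : p ∣ g.den
    · simp [hden]
    have hpo : Odd p := hpr.odd_of_ne_two h2
    have hiff := aux_part1 g d hd2 p hpr hpo hnum hden
    have hd2m : d / 2 ∣ d := ⟨2, by omega⟩
    have hdd2 : d ∣ 2 * d := dvd_mul_left d 2
    by_cases hB : d ∣ ordp p g
    · have hAm : d / 2 ∣ ordp p g := hd2m.trans hB
      by_cases hC : 2 * d ∣ ordp p g
      · have hx : d ∣ ordp p (-g) := hiff.mpr (Or.inr ⟨hC, fun hc => hc.2 hB⟩)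
        simp [h2, hpr, hnum, hden, hB, hAm, hC, hx]
      · have hx : ¬ d ∣ ordp p (-g) := by
          rw [hiff]
          rintro (⟨⟨_, hb⟩, _⟩ | ⟨hc, _⟩)
          · exact hb hB
          · exact hC hc
        simp [h2, hpr, hnum, hden, hB, hAm, hC, hx]
    · have hC : ¬ 2 * d ∣ ordp p g := fun hc => hB (hdd2.trans hc)
      by_cases hAm : d / 2 ∣ ordp p g
      · have hx : d ∣ ordp p (-g) := hiff.mpr (Or.inl ⟨⟨hAm, hB⟩, hC⟩)
        simp [h2, hpr, hnum, hden, hB, hAm, hC, hx]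
      · have hx : ¬ d ∣ ordp p (-g) := by
          rw [hiff]
          rintro (⟨⟨ha, _⟩, _⟩ | ⟨hc, _⟩)
          · exact hAm ha
          · exact hC hc
        simp [h2, hpr, hnum, hden, hB, hAm, hC, hx]
  obtain ⟨hA1, hA2⟩ := aux_filter_ne_two s (fun p : ℕ => p.Prime ∧ ¬ (p : ℤ) ∣ g.num ∧ ¬ p ∣ g.den ∧ d ∣ ordp p (-g))
  obtain ⟨hm1, hm2⟩ := aux_filter_ne_two s (fun p : ℕ => p.Prime ∧ ¬ (p : ℤ) ∣ g.num ∧ ¬ p ∣ g.den ∧ d / 2 ∣ ordp p g)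
  obtain ⟨hd1, hd1'⟩ := aux_filter_ne_two s (fun p : ℕ => p.Prime ∧ ¬ (p : ℤ) ∣ g.num ∧ ¬ p ∣ g.den ∧ d ∣ ordp p g)
  obtain ⟨h21, h22⟩ := aux_filter_ne_two s (fun p : ℕ => p.Prime ∧ ¬ (p : ℤ) ∣ g.num ∧ ¬ p ∣ g.den ∧ 2 * d ∣ ordp p g)
  rw [eA, em, ed, e2]
  have k' := congrArg (fun n : ℕ => (n : ℝ)) key
  have cA1 := (Nat.cast_le (α := ℝ)).mpr hA1
  have cA2 := (Nat.cast_le (α := ℝ)).mpr hA2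
  have cm1 := (Nat.cast_le (α := ℝ)).mpr hm1
  have cm2 := (Nat.cast_le (α := ℝ)).mpr hm2
  have cd1 := (Nat.cast_le (α := ℝ)).mpr hd1
  have cd2 := (Nat.cast_le (α := ℝ)).mpr hd1'
  have c21 := (Nat.cast_le (α := ℝ)).mpr h21
  have c22 := (Nat.cast_le (α := ℝ)).mpr h22
  push_cast at k' cA1 cA2 cm1 cm2 cd1 cd2 c21 c22
  rw [abs_le]
  constructor
  · linarith
  · linarith
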